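/- A nontrivial Puiseux monoid M is finitely generated if and only if the set of denominators {d(x) : x ∈ M, x ≠ 0} is bounded. -/

import Mathlib

open scoped BigOperators

/-- A Puiseux monoid: an additive submonoid of ℚ consisting of nonnegative elements. -/
def IsPuiseux (M : AddSubmonoid ℚ) : Prop := ∀ x ∈ M, (0:ℚ) ≤ x

/-- `a` is an atom of the submonoid `S`. -/
def IsAtomOf {α : Type*} [AddCommMonoid α] (S : AddSubmonoid α) (a : α) : Prop :=
  a ∈ S ∧ a ≠ 0 ∧ ∀ u v : α, u ∈ S → v ∈ S → a = u + v → u = 0 ∨ v = 0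

/-- `x` has a factorization of length `n` into atoms of `S`. -/
def IsLengthOf {α : Type*} [AddCommMonoid α] (S : AddSubmonoid α) (x : α) (n : ℕ) : Prop :=
  ∃ f : Fin n → α, (∀ i, IsAtomOf S (f i)) ∧ x = ∑ i, f i

/-- The set of lengths of `x` in `S`. -/
def lengthsOf {α : Type*} [AddCommMonoid α] (S : AddSubmonoid α) (x : α) : Set ℕ :=
  {n | IsLengthOf S x n}

/-- `S` is atomic: every nonzero element is a finite sum of atoms. -/
def AtomicM {α : Type*} [AddCommMonoid α] (S : AddSubmonoid α) : Prop :=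
  ∀ x ∈ S, x ≠ 0 → ∃ n : ℕ, IsLengthOf S x n

/-- The system of sets of lengths of `M`. -/
def systemOfLengths (M : AddSubmonoid ℚ) : Set (Set ℕ) :=
  {S | ∃ x ∈ M, lengthsOf M x = S}

/-- The elementary Puiseux monoid ⟨1/p : p prime⟩. -/
def elemPM : AddSubmonoid ℚ :=
  AddSubmonoid.closure {q : ℚ | ∃ p : ℕ, p.Prime ∧ q = 1 / p}



/-- Every additive submonoid of ℕ is finitely generated. -/
lemma nat_addSubmonoid_fg (S : AddSubmonoid ℕ) : S.FG := by
  by_cases hS : ∃ a ∈ S, a ≠ 0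
  · obtain ⟨a, haS, ha⟩ := hS
    have ha' : 0 < a := Nat.pos_of_ne_zero ha
    set g : ℕ → ℕ := fun r => sInf {n | n ∈ S ∧ n % a = r} with hg
    refine ⟨insert a ((Finset.range a).image g), le_antisymm ?_ ?_⟩
    · rw [AddSubmonoid.closure_le]
      intro x hx
      simp only [Finset.coe_insert, Finset.coe_image, Finset.coe_range, Set.mem_insert_iff,
        Set.mem_image, Set.mem_Iio] at hx
      rcases hx with rfl | ⟨r, _, rfl⟩
      · exact haS
      · by_cases hne : {n | n ∈ S ∧ n % a = r}.Nonempty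
        · exact (Nat.sInf_mem hne).1
        · rw [hg]
          simp only []
          rw [Set.not_nonempty_iff_eq_empty.mp hne, Nat.sInf_empty]
          exact S.zero_mem
    · intro s hs
      have hA : s ∈ {n | n ∈ S ∧ n % a = s % a} := ⟨hs, rfl⟩
      have hm := Nat.sInf_mem ⟨s, hA⟩
      have hms : sInf {n | n ∈ S ∧ n % a = s % a} ≤ s := Nat.sInf_le hA
      set m := sInf {n | n ∈ S ∧ n % a = s % a} with hmdef
      have hmod : m ≡ s [MOD a] := by
        unfold Nat.ModEq
        rw [hm.2]
      obtain ⟨k, hk⟩ := (Nat.modEq_iff_dvd' hms).mp hmod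
      have hmem_m : m ∈ AddSubmonoid.closure
          (↑(insert a ((Finset.range a).image g)) : Set ℕ) := by
        apply AddSubmonoid.subset_closure
        simp only [Finset.coe_insert, Finset.coe_image, Finset.coe_range, Set.mem_insert_iff,
          Set.mem_image, Set.mem_Iio]
        right
        exact ⟨s % a, Nat.mod_lt _ ha', rfl⟩
      have hmem_a : a ∈ AddSubmonoid.closure
          (↑(insert a ((Finset.range a).image g)) : Set ℕ) := by
        apply AddSubmonoid.subset_closure
        simp
      have : s = m + k • a := by
        simp only [smul_eq_mul, mul_comm k a]
        omega
      rw [this]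
      exact AddSubmonoid.add_mem _ hmem_m (AddSubmonoid.nsmul_mem _ hmem_a k)
  · push_neg at hS
    have : S = ⊥ := by
      ext x
      simp only [AddSubmonoid.mem_bot]
      exact ⟨fun hx => hS x hx, fun h => h ▸ S.zero_mem⟩
    exact ⟨∅, by simp [this]⟩

lemma den_dvd_of_mul_natCast {q : ℚ} {n : ℕ} (h : ∃ z : ℤ, q * n = z) : q.den ∣ n := by
  rcases Nat.eq_zero_or_pos n with rfl | hn
  · exact dvd_zero _
  obtain ⟨z, hz⟩ := h
  have hq : q = (z : ℚ) / (n : ℚ) := by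
    field_simp at hz ⊢
    linarith [hz]
  have : q = Rat.divInt z n := by rw [Rat.divInt_eq_div, hq]; norm_num
  have hd := Rat.den_dvd z (n : ℤ)
  rw [← this] at hd
  exact_mod_cast hd

lemma mul_natCast_int_of_den_dvd {q : ℚ} {n : ℕ} (h : q.den ∣ n) : ∃ z : ℤ, q * n = z := by
  obtain ⟨k, hk⟩ := h
  refine ⟨q.num * k, ?_⟩
  subst hk
  push_cast
  rw [← mul_assoc, Rat.mul_den_eq_num]

/-- A nontrivial Puiseux monoid is finitely generated iff its set of
denominators of nonzero elements is bounded. -/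
theorem stmt4 (M : AddSubmonoid ℚ) (hP : IsPuiseux M) (hnt : M ≠ ⊥) :
    M.FG ↔ ∃ B : ℕ, ∀ x ∈ M, x ≠ 0 → x.den ≤ B := by
  constructor
  · rintro ⟨T, hT⟩
    refine ⟨∏ t ∈ T, t.den, fun x hx hx0 => ?_⟩
    have key : ∀ y ∈ M, y.den ∣ ∏ t ∈ T, t.den := by
      intro y hy
      rw [← hT] at hy
      induction hy using AddSubmonoid.closure_induction with
      | mem t ht => exact Finset.dvd_prod_of_mem _ ht
      | zero => simp
      | add u v hu hv ihu ihv =>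
        apply den_dvd_of_mul_natCast
        obtain ⟨zu, hzu⟩ := mul_natCast_int_of_den_dvd ihu
        obtain ⟨zv, hzv⟩ := mul_natCast_int_of_den_dvd ihv
        exact ⟨zu + zv, by rw [add_mul, hzu, hzv]; push_cast; ring⟩
    have hpos : 0 < ∏ t ∈ T, t.den :=
      Finset.prod_pos fun t _ => t.pos
    exact Nat.le_of_dvd hpos (key x hx)
  · rintro ⟨B, hB⟩
    set N := B.factorial with hNdef
    have hN : 0 < N := B.factorial_pos
    have hden : ∀ x ∈ M, x.den ∣ N := by
      intro x hx
      rcases eq_or_ne x 0 with rfl | h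
      · simp [Rat.den_ofNat]
      · exact Nat.dvd_factorial x.pos (hB x hx h)
    let f : ℕ →+ ℚ :=
      { toFun := fun n => (n : ℚ) / N
        map_zero' := by simp
        map_add' := by intro m n; push_cast; ring }
    have hNQ : (N : ℚ) ≠ 0 := Nat.cast_ne_zero.mpr hN.ne'
    have hrange : ∀ x ∈ M, ∃ n : ℕ, f n = x := by
      intro x hx
      obtain ⟨k, hk⟩ := hden x hx
      have hk0 : k ≠ 0 := by
        rintro rfl; rw [Nat.mul_zero] at hk; exact hN.ne' hk
      have hnum : (0:ℤ) ≤ x.num := Rat.num_nonneg.mpr (hP x hx)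
      refine ⟨x.num.toNat * k, ?_⟩
      have hcast : ((x.num.toNat * k : ℕ) : ℚ) = (x.num : ℚ) * k := by
        have h1 := Int.toNat_of_nonneg hnum
        have h2 : ((x.num.toNat : ℕ) : ℚ) = (x.num : ℚ) := by exact_mod_cast h1
        rw [Nat.cast_mul, h2]
      show ((x.num.toNat * k : ℕ) : ℚ) / N = x
      rw [hcast, hk]
      push_cast
      rw [mul_div_mul_right _ _ (by exact_mod_cast hk0 : ((k:ℚ) ≠ 0))]
      exact Rat.num_div_den x
    have hM : M = AddSubmonoid.map f (AddSubmonoid.comap f M) := by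
      ext x
      constructor
      · intro hx
        obtain ⟨n, hn⟩ := hrange x hx
        exact ⟨n, by simpa [AddSubmonoid.mem_comap, hn] using hx, hn⟩
      · rintro ⟨n, hn, rfl⟩
        exact hn
    rw [hM]
    exact (nat_addSubmonoid_fg _).map f
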